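/- Let ξ and η be real-valued random variables such that the function u ↦ P(η ≥ u) is log-concave on ℝ, and suppose E (ξ - t)₊² ≤ E (η - t)₊² for all t ∈ ℝ. Then P(ξ ≥ x) ≤ (e²/2)·P(η ≥ x) for all x ∈ ℝ. -/

import Mathlib

open MeasureTheory Set Real


private lemma int_max_sq {Ω : Type*} [MeasurableSpace Ω] {μ : Measure Ω} [IsProbabilityMeasure μ]
    {f : Ω → ℝ} (hm : Measurable f) (h2 : MemLp f 2 μ) (t : ℝ) :
    Integrable (fun ω => (max (f ω - t) 0) ^ 2) μ := by
  have h1 : MemLp (fun ω => f ω - t) 2 μ := h2.sub (memLp_const t)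
  have h3 : MemLp (fun ω => max (f ω - t) 0) 2 μ := by
    refine MemLp.of_le h1 ?_ (Filter.Eventually.of_forall fun ω => ?_)
    · exact ((hm.sub measurable_const).max measurable_const).aestronglyMeasurable
    · rw [Real.norm_eq_abs, Real.norm_eq_abs, abs_of_nonneg (le_max_right _ _)]
      exact max_le (le_abs_self _) (abs_nonneg _)
  exact h3.integrable_sq

private lemma markov_lb {Ω : Type*} [MeasurableSpace Ω] {μ : Measure Ω} [IsProbabilityMeasure μ]
    {f : Ω → ℝ} (hm : Measurable f) (h2 : MemLp f 2 μ) {t x : ℝ} (htx : t ≤ x) :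
    (x - t) ^ 2 * (μ {ω | x ≤ f ω}).toReal ≤ ∫ ω, (max (f ω - t) 0) ^ 2 ∂μ := by
  have hs : MeasurableSet {ω | x ≤ f ω} := measurableSet_le measurable_const hm
  have hpt : ∀ ω, Set.indicator {ω | x ≤ f ω} (fun _ => (x - t) ^ 2) ω
      ≤ (max (f ω - t) 0) ^ 2 := by
    intro ω
    by_cases h : ω ∈ {ω | x ≤ f ω}
    · rw [Set.indicator_of_mem h]
      have h1 : x - t ≤ max (f ω - t) 0 := le_trans (by simp at h; linarith) (le_max_left _ _)
      exact pow_le_pow_left₀ (by linarith) h1 2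
    · rw [Set.indicator_of_notMem h]; positivity
  have hint := integral_mono ((integrable_const ((x - t) ^ 2)).indicator hs)
    (int_max_sq hm h2 t) hpt
  rwa [integral_indicator_const _ hs, smul_eq_mul, mul_comm] at hint


private lemma gamma_two_integral {c : ℝ} (hc : 0 < c) :
    ∫ s in Set.Ioi (0:ℝ), s * Real.exp (-(c * s)) = 1 / c ^ 2 := by
  have h := Real.integral_rpow_mul_exp_neg_mul_Ioi (a := 2) (r := c) (by norm_num) hc
  rw [Real.Gamma_two, mul_one] at h
  have heq : ∀ s ∈ Set.Ioi (0:ℝ), s ^ ((2:ℝ) - 1) * Real.exp (-(c * s))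
      = s * Real.exp (-(c * s)) := by
    intro s hs
    norm_num [Real.rpow_one]
  rw [setIntegral_congr_fun measurableSet_Ioi heq] at h
  rw [h, show ((2:ℝ)) = ((2:ℕ):ℝ) by norm_num, Real.rpow_natCast]
  field_simp

private lemma gamma_two_integrable {c : ℝ} (hc : 0 < c) :
    IntegrableOn (fun s => s * Real.exp (-(c * s))) (Set.Ioi (0:ℝ)) := by
  have h0 := Real.GammaIntegral_convergent (s := 2) (by norm_num)
  have h1 : IntegrableOn (fun s : ℝ => Real.exp (-(c * s)) * (c * s) ^ ((2:ℝ) - 1))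
      (Set.Ioi (0:ℝ)) := by
    have := (MeasureTheory.integrableOn_Ioi_comp_mul_left_iff
      (fun x : ℝ => Real.exp (-x) * x ^ ((2:ℝ) - 1)) 0 hc).2 (by simpa using h0)
    simpa using this
  have h2 : IntegrableOn (c⁻¹ • fun s : ℝ => Real.exp (-(c * s)) * (c * s) ^ ((2:ℝ) - 1))
      (Set.Ioi (0:ℝ)) := h1.smul (c := c⁻¹)
  refine h2.congr_fun (fun s hs => ?_) measurableSet_Ioi
  have hs0 : (0:ℝ) < s := hs
  simp only [Pi.smul_apply, smul_eq_mul]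
  norm_num [Real.rpow_one]
  field_simp



private lemma bdd_tail_bound {Ω : Type*} [MeasurableSpace Ω] {μ : Measure Ω} [IsProbabilityMeasure μ]
    {f : Ω → ℝ} (hm : Measurable f) (h2 : MemLp f 2 μ) {x t : ℝ}
    (h0 : μ {ω | x < f ω} = 0) (htx : t ≤ x) :
    ∫ ω, (max (f ω - t) 0) ^ 2 ∂μ ≤ (x - t) ^ 2 * (μ {ω | t ≤ f ω}).toReal := by
  have hs : MeasurableSet {ω | t ≤ f ω} := measurableSet_le measurable_const hm
  have hae : ∀ᵐ ω ∂μ, f ω ≤ x := by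
    rw [ae_iff]
    convert h0 using 2
    ext ω; simp
  have hpt : ∀ᵐ ω ∂μ, (max (f ω - t) 0) ^ 2
      ≤ Set.indicator {ω | t ≤ f ω} (fun _ => (x - t) ^ 2) ω := by
    filter_upwards [hae] with ω hω
    by_cases h : ω ∈ {ω | t ≤ f ω}
    · rw [Set.indicator_of_mem h]
      have h1 : max (f ω - t) 0 ≤ x - t := max_le (by linarith) (by linarith)
      exact pow_le_pow_left₀ (le_max_right _ _) h1 2
    · simp only [Set.mem_setOf_eq, not_le] at h
      rw [Set.indicator_of_notMem (by simp [not_le.mpr h])]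
      rw [max_eq_right (by linarith)]
      simp
  have hint := integral_mono_ae (int_max_sq hm h2 t)
    ((integrable_const ((x - t) ^ 2)).indicator hs) hpt
  rwa [integral_indicator_const _ hs, smul_eq_mul, mul_comm] at hint



private lemma exp_tail_bound {Ω : Type*} [MeasurableSpace Ω] {μ : Measure Ω}
    [IsProbabilityMeasure μ] {f : Ω → ℝ} (hm : Measurable f) {p c x : ℝ} (t : ℝ)
    (hc : 0 < c) (hp : 0 ≤ p)
    (hb : ∀ u : ℝ, μ {ω | u ≤ f ω} ≤ ENNReal.ofReal (p * Real.exp (-(c * (u - x))))) :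
    ∫ ω, (max (f ω - t) 0) ^ 2 ∂μ ≤ 2 * p * Real.exp (c * (x - t)) / c ^ 2 := by
  set g : Ω → ℝ := fun ω => max (f ω - t) 0 with hg
  have gm : Measurable g := (hm.sub measurable_const).max measurable_const
  have g_nn : ∀ ω, 0 ≤ g ω := fun ω => le_max_right _ _
  -- step 1: Bochner integral equals lintegral
  have step1 : ∫ ω, g ω ^ 2 ∂μ = (∫⁻ ω, ENNReal.ofReal (g ω ^ 2) ∂μ).toReal := by
    exact integral_eq_lintegral_of_nonneg_ae (Filter.Eventually.of_forall fun ω => sq_nonneg _)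
      ((gm.pow_const 2).aestronglyMeasurable)
  -- step 2: layercake
  have step2 : ∫⁻ ω, ENNReal.ofReal (g ω ^ 2) ∂μ
      = ∫⁻ s in Set.Ioi (0:ℝ), μ {a | s ≤ g a} * ENNReal.ofReal (2 * s) := by
    have hcake := lintegral_comp_eq_lintegral_meas_le_mul μ (f := g) (g := fun s => 2 * s)
      (Filter.Eventually.of_forall g_nn) gm.aemeasurable
      (fun t ht => (continuous_const.mul continuous_id).intervalIntegrable _ _)
      ((ae_restrict_iff' measurableSet_Ioi).2 (Filter.Eventually.of_forall fun s hs => by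
        simp only [Set.mem_Ioi] at hs; positivity))
    rw [← hcake]
    congr 1
    ext ω
    congr 1
    rw [intervalIntegral.integral_const_mul, _root_.integral_id]
    ring
  -- step 3: bound lintegral
  have step3 : ∫⁻ s in Set.Ioi (0:ℝ), μ {a | s ≤ g a} * ENNReal.ofReal (2 * s)
      ≤ ∫⁻ s in Set.Ioi (0:ℝ),
        ENNReal.ofReal (2 * p * Real.exp (c * (x - t))) * ENNReal.ofReal (s * Real.exp (-(c * s))) := by
    refine lintegral_mono_ae ((ae_restrict_iff' measurableSet_Ioi).2
      (Filter.Eventually.of_forall fun s hs => ?_))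
    simp only [Set.mem_Ioi] at hs
    have hset : {a | s ≤ g a} = {a | t + s ≤ f a} := by
      ext a
      simp only [Set.mem_setOf_eq, hg, le_max_iff]
      constructor
      · rintro (h | h)
        · linarith
        · linarith
      · intro h; left; linarith
    calc μ {a | s ≤ g a} * ENNReal.ofReal (2 * s)
        ≤ ENNReal.ofReal (p * Real.exp (-(c * (t + s - x)))) * ENNReal.ofReal (2 * s) := by
          rw [hset]; exact mul_le_mul_left (hb (t + s)) _
      _ = ENNReal.ofReal (2 * p * Real.exp (c * (x - t))) * ENNReal.ofReal (s * Real.exp (-(c * s))) := by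
          rw [← ENNReal.ofReal_mul (by positivity), ← ENNReal.ofReal_mul (by positivity)]
          congr 1
          rw [show -(c * (t + s - x)) = c * (x - t) + -(c * s) by ring, Real.exp_add]
          ring
  -- step 4: compute the RHS
  have step4 : ∫⁻ s in Set.Ioi (0:ℝ),
      ENNReal.ofReal (2 * p * Real.exp (c * (x - t))) * ENNReal.ofReal (s * Real.exp (-(c * s)))
      = ENNReal.ofReal (2 * p * Real.exp (c * (x - t))) * ENNReal.ofReal (1 / c ^ 2) := by
    rw [lintegral_const_mul' _ _ ENNReal.ofReal_ne_top]
    congr 1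
    rw [← ofReal_integral_eq_lintegral_ofReal (gamma_two_integrable hc)
      ((ae_restrict_iff' measurableSet_Ioi).2 (Filter.Eventually.of_forall fun s hs => by
        simp only [Set.mem_Ioi] at hs; positivity))]
    rw [gamma_two_integral hc]
  -- combine
  show (∫ ω, g ω ^ 2 ∂μ) ≤ _
  rw [step1]
  have hfin : (∫⁻ ω, ENNReal.ofReal (g ω ^ 2) ∂μ)
      ≤ ENNReal.ofReal (2 * p * Real.exp (c * (x - t))) * ENNReal.ofReal (1 / c ^ 2) := by
    rw [step2]; exact step3.trans (le_of_eq step4)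
  calc (∫⁻ ω, ENNReal.ofReal (g ω ^ 2) ∂μ).toReal
      ≤ (ENNReal.ofReal (2 * p * Real.exp (c * (x - t))) * ENNReal.ofReal (1 / c ^ 2)).toReal := by
        refine ENNReal.toReal_mono (by finiteness) hfin
    _ = 2 * p * Real.exp (c * (x - t)) / c ^ 2 := by
        rw [← ENNReal.ofReal_mul (by positivity), ENNReal.toReal_ofReal (by positivity)]
        ring



theorem stmt_5 {Ω₁ Ω₂ : Type*} [MeasurableSpace Ω₁] [MeasurableSpace Ω₂]
    (μ₁ : Measure Ω₁) (μ₂ : Measure Ω₂)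
    [IsProbabilityMeasure μ₁] [IsProbabilityMeasure μ₂]
    (ξ : Ω₁ → ℝ) (η : Ω₂ → ℝ) (hξm : Measurable ξ) (hηm : Measurable η)
    (hξ2 : MemLp ξ 2 μ₁) (hη2 : MemLp η 2 μ₂)
    (hlc : ∀ x y : ℝ, ∀ l ∈ Set.Icc (0 : ℝ) 1,
      (μ₂ {ω | x ≤ η ω}).toReal ^ (1 - l) * (μ₂ {ω | y ≤ η ω}).toReal ^ l ≤
        (μ₂ {ω | (1 - l) * x + l * y ≤ η ω}).toReal)
    (hmom : ∀ t : ℝ,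
      ∫ ω, (max (ξ ω - t) 0) ^ 2 ∂μ₁ ≤ ∫ ω, (max (η ω - t) 0) ^ 2 ∂μ₂) :
    ∀ x : ℝ, (μ₁ {ω | x ≤ ξ ω}).toReal ≤
      Real.exp 2 / 2 * (μ₂ {ω | x ≤ η ω}).toReal := by
  have hGanti : ∀ u v : ℝ, u ≤ v → (μ₂ {ω | v ≤ η ω}).toReal ≤ (μ₂ {ω | u ≤ η ω}).toReal :=
    fun u v huv => ENNReal.toReal_mono (measure_ne_top _ _)
      (measure_mono fun ω hω => le_trans huv hω)
  -- the key three-point log-concavity inequality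
  have hkey : ∀ a b d : ℝ, a < b → b < d → 0 < (μ₂ {ω | d ≤ η ω}).toReal →
      (d - b) * Real.log (μ₂ {ω | a ≤ η ω}).toReal
        + (b - a) * Real.log (μ₂ {ω | d ≤ η ω}).toReal
      ≤ (d - a) * Real.log (μ₂ {ω | b ≤ η ω}).toReal := by
    intro a b d hab hbd hGd
    have hGa : 0 < (μ₂ {ω | a ≤ η ω}).toReal := lt_of_lt_of_le hGd (hGanti a d (by linarith))
    have hGb : 0 < (μ₂ {ω | b ≤ η ω}).toReal := lt_of_lt_of_le hGd (hGanti b d hbd.le)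
    have hda : (0:ℝ) < d - a := by linarith
    set l := (b - a) / (d - a) with hl
    have hl0 : 0 ≤ l := div_nonneg (by linarith) hda.le
    have hl1 : l ≤ 1 := by rw [hl, div_le_one hda]; linarith
    have hcomb : (1 - l) * a + l * d = b := by
      rw [hl]; field_simp; ring
    have h := hlc a d l ⟨hl0, hl1⟩
    rw [hcomb] at h
    have hlog := Real.log_le_log (by positivity) h
    rw [Real.log_mul (by positivity) (by positivity), Real.log_rpow hGa, Real.log_rpow hGd]
      at hlog
    have h2 := mul_le_mul_of_nonneg_left hlog hda.le
    have e1 : (d - a) * ((1 - l) * Real.log (μ₂ {ω | a ≤ η ω}).toReal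
        + l * Real.log (μ₂ {ω | d ≤ η ω}).toReal)
        = (d - b) * Real.log (μ₂ {ω | a ≤ η ω}).toReal
          + (b - a) * Real.log (μ₂ {ω | d ≤ η ω}).toReal := by
      rw [hl]; field_simp; ring
    linarith
  have hexp2 : (1:ℝ) ≤ Real.exp 2 / 2 := by
    have := Real.add_one_le_exp 2; linarith
  intro x
  have hGnnx : 0 ≤ (μ₂ {ω | x ≤ η ω}).toReal := ENNReal.toReal_nonneg
  have hPle1 : (μ₁ {ω | x ≤ ξ ω}).toReal ≤ 1 := by
    rw [← ENNReal.toReal_one]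
    exact ENNReal.toReal_mono ENNReal.one_ne_top prob_le_one
  by_cases hzero : μ₂ {ω | x < η ω} = 0
  · -- η ≤ x a.e.: direct bound
    have hPt : ∀ t : ℝ, t < x →
        (μ₁ {ω | x ≤ ξ ω}).toReal ≤ (μ₂ {ω | t ≤ η ω}).toReal := by
      intro t ht
      have h1 := markov_lb hξm hξ2 ht.le (μ := μ₁)
      have h3 := bdd_tail_bound hηm hη2 hzero ht.le
      have hx2 : (0:ℝ) < (x - t) ^ 2 := pow_pos (by linarith) 2
      have hchain := (h1.trans ((hmom t).trans h3))
      exact (mul_le_mul_iff_of_pos_left hx2).1 hchain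
    -- take the limit t ↑ x
    have hmono : Antitone (fun n : ℕ => {ω | x - 1/((n:ℝ)+1) ≤ η ω}) := by
      intro n m hnm ω hω
      simp only [Set.mem_setOf_eq] at hω ⊢
      have hc : (n:ℝ) ≤ (m:ℝ) := Nat.cast_le.2 hnm
      have : 1/((m:ℝ)+1) ≤ 1/((n:ℝ)+1) :=
        one_div_le_one_div_of_le (by positivity) (by linarith)
      linarith
    have hInter : (⋂ n : ℕ, {ω | x - 1/((n:ℝ)+1) ≤ η ω}) = {ω | x ≤ η ω} := by
      ext ω
      simp only [Set.mem_iInter, Set.mem_setOf_eq]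
      constructor
      · intro h
        by_contra hlt
        push_neg at hlt
        obtain ⟨n, hn⟩ := exists_nat_one_div_lt (show (0:ℝ) < x - η ω by linarith)
        have := h n
        linarith
      · intro h n
        have : (0:ℝ) < 1/((n:ℝ)+1) := by positivity
        linarith
    have htend := tendsto_measure_iInter_atTop (μ := μ₂)
      (fun n => (measurableSet_le measurable_const hηm).nullMeasurableSet)
      hmono ⟨0, measure_ne_top _ _⟩
    rw [hInter] at htend
    have htendR : Filter.Tendsto (fun n : ℕ => (μ₂ {ω | x - 1/((n:ℝ)+1) ≤ η ω}).toReal)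
        Filter.atTop (nhds (μ₂ {ω | x ≤ η ω}).toReal) :=
      (ENNReal.tendsto_toReal (measure_ne_top _ _)).comp htend
    have hPG : (μ₁ {ω | x ≤ ξ ω}).toReal ≤ (μ₂ {ω | x ≤ η ω}).toReal := by
      refine ge_of_tendsto htendR (Filter.Eventually.of_forall fun n => hPt _ ?_)
      have : (0:ℝ) < 1/((n:ℝ)+1) := by positivity
      linarith
    nlinarith
  · -- main case
    have hne : ∃ n : ℕ, μ₂ {ω | x + 1/((n:ℝ)+1) ≤ η ω} ≠ 0 := by
      by_contra h
      push_neg at h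
      apply hzero
      refine measure_mono_null ?_ (measure_iUnion_null h)
      intro ω hω
      simp only [Set.mem_setOf_eq] at hω
      obtain ⟨n, hn⟩ := exists_nat_one_div_lt (show (0:ℝ) < η ω - x by linarith)
      exact Set.mem_iUnion.2 ⟨n, by simp only [Set.mem_setOf_eq]; linarith⟩
    obtain ⟨n₀, hn₀⟩ := hne
    set u₀ : ℝ := x + 1/((n₀:ℝ)+1) with hu₀def
    have hu₀x : x < u₀ := by
      have h01 : (0:ℝ) < 1/((n₀:ℝ)+1) := by positivity
      rw [hu₀def]; linarith
    have hGu₀ : 0 < (μ₂ {ω | u₀ ≤ η ω}).toReal :=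
      ENNReal.toReal_pos hn₀ (measure_ne_top _ _)
    have hGx : 0 < (μ₂ {ω | x ≤ η ω}).toReal := lt_of_lt_of_le hGu₀ (hGanti x u₀ hu₀x.le)
    set L : ℝ → ℝ := fun v => Real.log (μ₂ {ω | v ≤ η ω}).toReal with hLdef
    set S : Set ℝ := (fun v => (L v - L x) / (v - x)) '' Set.Ioc x u₀ with hSdef
    have hSne : S.Nonempty := ⟨_, ⟨u₀, ⟨hu₀x, le_rfl⟩, rfl⟩⟩
    have hGposIoc : ∀ v ∈ Set.Ioc x u₀, 0 < (μ₂ {ω | v ≤ η ω}).toReal :=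
      fun v hv => lt_of_lt_of_le hGu₀ (hGanti v u₀ hv.2)
    have hSub : ∀ y ∈ S, y ≤ 0 := by
      rintro y ⟨v, hv, rfl⟩
      have hLvx : L v ≤ L x := Real.log_le_log (hGposIoc v hv) (hGanti x v hv.1.le)
      exact div_nonpos_of_nonpos_of_nonneg (by linarith) (by linarith [hv.1])
    have hSbdd : BddAbove S := ⟨0, hSub⟩
    have hsup0 : sSup S ≤ 0 := csSup_le hSne hSub
    -- the supporting-line bound
    have hsupp : ∀ v : ℝ, (μ₂ {ω | v ≤ η ω}).toReal
        ≤ (μ₂ {ω | x ≤ η ω}).toReal * Real.exp (sSup S * (v - x)) := by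
      intro v
      by_cases hGv : (μ₂ {ω | v ≤ η ω}).toReal = 0
      · rw [hGv]; positivity
      have hGvpos : 0 < (μ₂ {ω | v ≤ η ω}).toReal :=
        lt_of_le_of_ne ENNReal.toReal_nonneg (Ne.symm hGv)
      have hq : L v - L x ≤ sSup S * (v - x) := by
        rcases lt_trichotomy v x with hvx | rfl | hxv
        · have hub : ∀ y ∈ S, y ≤ (L v - L x) / (v - x) := by
            rintro y ⟨w, hw, rfl⟩
            have hk := hkey v x w hvx hw.1 (hGposIoc w hw)
            rw [show (L v - L x) / (v - x) = (L x - L v) / (x - v) by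
              rw [← neg_div_neg_eq]; ring_nf]
            rw [div_le_div_iff₀ (by linarith [hw.1]) (by linarith)]
            nlinarith [hk]
          have h1 : sSup S ≤ (L v - L x) / (v - x) := csSup_le hSne hub
          have h2 := mul_le_mul_of_nonpos_right h1 (by linarith : v - x ≤ 0)
          rw [div_mul_cancel₀ _ (by linarith : v - x ≠ 0)] at h2
          linarith
        · simp
        · rcases le_or_gt v u₀ with hvu | huv
          · have hmem : (L v - L x) / (v - x) ∈ S := ⟨v, ⟨hxv, hvu⟩, rfl⟩
            have h1 := le_csSup hSbdd hmem
            have h2 := mul_le_mul_of_nonneg_right h1 (by linarith : (0:ℝ) ≤ v - x)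
            rw [div_mul_cancel₀ _ (by linarith : v - x ≠ 0)] at h2
            linarith
          · have hk := hkey x u₀ v hu₀x huv hGvpos
            have hqu : (L v - L x) / (v - x) ≤ (L u₀ - L x) / (u₀ - x) := by
              rw [div_le_div_iff₀ (by linarith) (by linarith [hu₀x])]
              nlinarith [hk]
            have hmem : (L u₀ - L x) / (u₀ - x) ∈ S := ⟨u₀, ⟨hu₀x, le_rfl⟩, rfl⟩
            have h1 := hqu.trans (le_csSup hSbdd hmem)
            have h2 := mul_le_mul_of_nonneg_right h1 (by linarith : (0:ℝ) ≤ v - x)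
            rw [div_mul_cancel₀ _ (by linarith : v - x ≠ 0)] at h2
            linarith
      calc (μ₂ {ω | v ≤ η ω}).toReal = Real.exp (L v) := (Real.exp_log hGvpos).symm
        _ ≤ Real.exp (L x + sSup S * (v - x)) := Real.exp_le_exp.2 (by linarith)
        _ = (μ₂ {ω | x ≤ η ω}).toReal * Real.exp (sSup S * (v - x)) := by
            rw [Real.exp_add, Real.exp_log hGx]
    rcases eq_or_lt_of_le hsup0 with hseq | hslt
    · -- slope 0 : G x = 1
      have hGv1 : ∀ v : ℝ, (μ₂ {ω | v ≤ η ω}).toReal ≤ (μ₂ {ω | x ≤ η ω}).toReal := by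
        intro v
        have := hsupp v
        rw [hseq, zero_mul, Real.exp_zero, mul_one] at this
        exact this
      have hmono : Monotone (fun n : ℕ => {ω | -(n:ℝ) ≤ η ω}) := by
        intro n m hnm ω hω
        simp only [Set.mem_setOf_eq] at hω ⊢
        have : (n:ℝ) ≤ (m:ℝ) := Nat.cast_le.2 hnm
        linarith
      have hUnion : (⋃ n : ℕ, {ω | -(n:ℝ) ≤ η ω}) = Set.univ := by
        ext ω
        simp only [Set.mem_iUnion, Set.mem_setOf_eq, Set.mem_univ, iff_true]
        obtain ⟨n, hn⟩ := exists_nat_ge (-η ω)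
        exact ⟨n, by linarith⟩
      have htend := tendsto_measure_iUnion_atTop (μ := μ₂) hmono
      rw [hUnion, measure_univ] at htend
      have htendR : Filter.Tendsto (fun n : ℕ => (μ₂ {ω | -(n:ℝ) ≤ η ω}).toReal)
          Filter.atTop (nhds 1) := by
        have := (ENNReal.tendsto_toReal ENNReal.one_ne_top).comp htend
        exact this
      have h1Gx : (1:ℝ) ≤ (μ₂ {ω | x ≤ η ω}).toReal :=
        le_of_tendsto htendR (Filter.Eventually.of_forall fun n => hGv1 _)
      nlinarith
    · -- positive slope : exponential bound
      set c : ℝ := -sSup S with hcdef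
      have hcpos : 0 < c := by rw [hcdef]; linarith
      set t : ℝ := x - 2 / c with htdef
      have htx : t ≤ x := by
        rw [htdef]
        have : (0:ℝ) < 2 / c := by positivity
        linarith
      have hb : ∀ u : ℝ, μ₂ {ω | u ≤ η ω}
          ≤ ENNReal.ofReal ((μ₂ {ω | x ≤ η ω}).toReal * Real.exp (-(c * (u - x)))) := by
        intro u
        have h := hsupp u
        have heq : sSup S * (u - x) = -(c * (u - x)) := by rw [hcdef]; ring
        rw [heq] at h
        calc μ₂ {ω | u ≤ η ω} = ENNReal.ofReal (μ₂ {ω | u ≤ η ω}).toReal :=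
              (ENNReal.ofReal_toReal (measure_ne_top _ _)).symm
          _ ≤ _ := ENNReal.ofReal_le_ofReal h
      have h3 := exp_tail_bound hηm t hcpos hGnnx hb
      have h1 := markov_lb hξm hξ2 htx (μ := μ₁)
      have hchain := h1.trans ((hmom t).trans h3)
      have hxt : x - t = 2 / c := by rw [htdef]; ring
      have hexpc : c * (x - t) = 2 := by
        rw [hxt]; field_simp
      rw [hexpc, hxt] at hchain
      calc (μ₁ {ω | x ≤ ξ ω}).toReal
          = (c ^ 2 / 4) * ((2 / c) ^ 2 * (μ₁ {ω | x ≤ ξ ω}).toReal) := by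
            field_simp; ring
        _ ≤ (c ^ 2 / 4) * (2 * (μ₂ {ω | x ≤ η ω}).toReal * Real.exp 2 / c ^ 2) := by
            apply mul_le_mul_of_nonneg_left hchain (by positivity)
        _ = Real.exp 2 / 2 * (μ₂ {ω | x ≤ η ω}).toReal := by
            field_simp; ring
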